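/- arXiv:2405.08730 — 7 statements merged into one kernel-verified Lean document; each statement's English description precedes it below -/
import Mathlib

section
/- Let F be a real matrix with rows indexed by the quadruples (i,i',j,j') (i < i', j < j') and columns indexed by a finite set of treatment effects, such that ker(Aᵀ) ⊆ ker(Fᵀ). Let v be a vector indexed by the effects and suppose there exists w₀ with Fᵀ w₀ = v. Then the set of observation-weight vectors of unbiased estimators, S = {Aᵀ w : Fᵀ w = v} ⊆ ℝ^(N×J), is the affine coset (Aᵀ w₀) + L, where L = Aᵀ(ker(Fᵀ)) is a linear subspace of ℝ^(N×J) whose dimension equals (N−1)(J−1) − rank(F). -/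
open Matrix

/-- Quadruples (i,i',j,j') with i < i' and j < j'. -/
abbrev Quad (N J : ℕ) :=
  {q : (Fin N × Fin N) × (Fin J × Fin J) // q.1.1 < q.1.2 ∧ q.2.1 < q.2.2}

/-- The matrix of all two-by-two DID estimators: the row indexed by (i,i',j,j')
has +1 in columns (i,j') and (i',j), −1 in columns (i,j) and (i',j'), 0 elsewhere. -/
def Amat (N J : ℕ) : Matrix (Quad N J) (Fin N × Fin J) ℝ :=
  Matrix.of fun q p =>
    (if p = (q.val.1.1, q.val.2.2) then (1 : ℝ) else 0)
      + (if p = (q.val.1.2, q.val.2.1) then 1 else 0)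
      - (if p = (q.val.1.1, q.val.2.1) then 1 else 0)
      - (if p = (q.val.1.2, q.val.2.2) then 1 else 0)

lemma mulVec_Amat (N J : ℕ) (y : Fin N × Fin J → ℝ) (q : Quad N J) :
    (Amat N J).mulVec y q
      = y (q.val.1.1, q.val.2.2) + y (q.val.1.2, q.val.2.1)
        - y (q.val.1.1, q.val.2.1) - y (q.val.1.2, q.val.2.2) := by
  simp [Amat, Matrix.mulVec, dotProduct, sub_mul, add_mul, ite_mul,
    Finset.sum_sub_distrib, Finset.sum_add_distrib]

/-- The "additive" map (a, b) ↦ (fun (i,j) => a i + b j). -/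
def addLin (N J : ℕ) : ((Fin N → ℝ) × (Fin J → ℝ)) →ₗ[ℝ] (Fin N × Fin J → ℝ) where
  toFun ab := fun p => ab.1 p.1 + ab.2 p.2
  map_add' x y := by funext p; simp; ring
  map_smul' c x := by funext p; simp; ring

/-- The diagonal map c ↦ (const c, const (-c)). -/
def diagLin (N J : ℕ) : ℝ →ₗ[ℝ] ((Fin N → ℝ) × (Fin J → ℝ)) where
  toFun c := (fun _ => c, fun _ => -c)
  map_add' x y := by
    refine Prod.ext ?_ ?_ <;> funext i <;> simp [Pi.add_apply] <;> ring
  map_smul' c x := by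
    refine Prod.ext ?_ ?_ <;> funext i <;> simp [Pi.smul_apply, smul_eq_mul] <;> ring

lemma ker_addLin (N J : ℕ) (hN : 1 ≤ N) (hJ : 1 ≤ J) :
    LinearMap.ker (addLin N J) = LinearMap.range (diagLin N J) := by
  ext ab
  constructor
  · intro hab
    have h : ∀ p : Fin N × Fin J, ab.1 p.1 + ab.2 p.2 = 0 := by
      intro p
      have := congrFun (LinearMap.mem_ker.mp hab) p
      simpa [addLin] using this
    set i0 : Fin N := ⟨0, by omega⟩
    set j0 : Fin J := ⟨0, by omega⟩
    refine ⟨ab.1 i0, ?_⟩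
    have hb : ∀ j, ab.2 j = -ab.1 i0 := fun j => by have := h (i0, j); linarith
    have ha : ∀ i, ab.1 i = ab.1 i0 := fun i => by
      have h1 := h (i, j0); have h2 := h (i0, j0); linarith
    ext x
    · simp [diagLin, ha x]
    · simp [diagLin, hb x]
  · rintro ⟨c, rfl⟩
    refine LinearMap.mem_ker.mpr ?_
    funext p
    simp [diagLin, addLin]

lemma ker_Amat (N J : ℕ) (hN : 1 ≤ N) (hJ : 1 ≤ J) :
    LinearMap.ker (Matrix.mulVecLin (Amat N J)) = LinearMap.range (addLin N J) := by
  ext y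
  constructor
  · intro hy
    have h : ∀ q : Quad N J,
        y (q.val.1.1, q.val.2.2) + y (q.val.1.2, q.val.2.1)
          - y (q.val.1.1, q.val.2.1) - y (q.val.1.2, q.val.2.2) = 0 := by
      intro q
      have := congrFun (LinearMap.mem_ker.mp hy) q
      rw [Matrix.mulVecLin_apply, mulVec_Amat] at this
      simpa using this
    set i0 : Fin N := ⟨0, by omega⟩
    set j0 : Fin J := ⟨0, by omega⟩
    refine ⟨(fun i => y (i, j0), fun j => y (i0, j) - y (i0, j0)), ?_⟩
    funext p
    obtain ⟨i, j⟩ := p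
    show y (i, j0) + (y (i0, j) - y (i0, j0)) = y (i, j)
    by_cases hi : i = i0
    · subst hi; ring
    by_cases hj : j = j0
    · subst hj; ring
    have hi' : i0 < i := by
      refine Fin.mk_lt_of_lt_val ?_
      have : i.val ≠ 0 := fun h0 => hi (Fin.ext h0)
      omega
    have hj' : j0 < j := by
      refine Fin.mk_lt_of_lt_val ?_
      have : j.val ≠ 0 := fun h0 => hj (Fin.ext h0)
      omega
    have := h ⟨((i0, i), (j0, j)), ⟨hi', hj'⟩⟩
    simp at this
    linarith
  · rintro ⟨ab, rfl⟩
    refine LinearMap.mem_ker.mpr ?_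
    funext q
    rw [Matrix.mulVecLin_apply, mulVec_Amat]
    simp only [addLin, LinearMap.coe_mk, AddHom.coe_mk, Pi.zero_apply]
    ring

lemma rank_Amat (N J : ℕ) (hN : 1 ≤ N) (hJ : 1 ≤ J) :
    (Amat N J).rank = (N - 1) * (J - 1) := by
  have hdiag_inj : Function.Injective (diagLin N J) := by
    intro a b hab
    have := congrFun (congrArg Prod.fst hab) ⟨0, by omega⟩
    simpa [diagLin] using this
  have h1 : Module.finrank ℝ (LinearMap.ker (addLin N J)) = 1 := by
    rw [ker_addLin N J hN hJ, LinearMap.finrank_range_of_inj hdiag_inj,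
      Module.finrank_self]
  have h2 := LinearMap.finrank_range_add_finrank_ker (addLin N J)
  rw [h1] at h2
  have hdom : Module.finrank ℝ ((Fin N → ℝ) × (Fin J → ℝ)) = N + J := by
    simp [Module.finrank_prod, Module.finrank_fintype_fun_eq_card]
  rw [hdom] at h2
  have h3 : Module.finrank ℝ (LinearMap.ker (Matrix.mulVecLin (Amat N J)))
      = N + J - 1 := by
    rw [ker_Amat N J hN hJ]
    omega
  have h4 := LinearMap.finrank_range_add_finrank_ker (Matrix.mulVecLin (Amat N J))
  rw [h3, Module.finrank_fintype_fun_eq_card] at h4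
  rw [Matrix.rank]
  have hcard : Fintype.card (Fin N × Fin J) = N * J := by simp
  rw [hcard] at h4
  obtain ⟨n, rfl⟩ : ∃ n, N = n + 1 := ⟨N - 1, by omega⟩
  obtain ⟨m, rfl⟩ : ∃ m, J = m + 1 := ⟨J - 1, by omega⟩
  simp only [Nat.add_sub_cancel]
  have : (n + 1) * (m + 1) = n * m + (n + 1 + (m + 1) - 1) := by ring_nf; omega
  omega

/-- If ker(Aᵀ) ⊆ ker(Fᵀ) and Fᵀ w₀ = v is solvable, then the set of
observation-weight vectors of unbiased estimators, S = {Aᵀ w : Fᵀ w = v}, is the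
affine coset (Aᵀ w₀) + L, where L = Aᵀ(ker Fᵀ) is a linear subspace of ℝ^(N×J)
of dimension (N−1)(J−1) − rank(F). -/
theorem unbiased_weight_space
    (N J : ℕ) (hN : 2 ≤ N) (hJ : 2 ≤ J)
    (Effects : Type) [Fintype Effects] [DecidableEq Effects]
    (F : Matrix (Quad N J) Effects ℝ)
    (hker : LinearMap.ker (Matrix.mulVecLin (Amat N J)ᵀ) ≤
      LinearMap.ker (Matrix.mulVecLin Fᵀ))
    (v : Effects → ℝ) (w₀ : Quad N J → ℝ) (hw₀ : Fᵀ.mulVec w₀ = v) :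
    ({u : Fin N × Fin J → ℝ | ∃ w : Quad N J → ℝ, Fᵀ.mulVec w = v ∧ u = (Amat N J)ᵀ.mulVec w}
        = {u : Fin N × Fin J → ℝ |
            ∃ x ∈ Submodule.map (Matrix.mulVecLin (Amat N J)ᵀ)
              (LinearMap.ker (Matrix.mulVecLin Fᵀ)),
              u = (Amat N J)ᵀ.mulVec w₀ + x})
      ∧ Module.finrank ℝ
          (Submodule.map (Matrix.mulVecLin (Amat N J)ᵀ)
            (LinearMap.ker (Matrix.mulVecLin Fᵀ)))
        = (N - 1) * (J - 1) - F.rank := by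
  constructor
  · ext u
    simp only [Set.mem_setOf_eq]
    constructor
    · rintro ⟨w, hFw, rfl⟩
      refine ⟨(Amat N J)ᵀ.mulVec (w - w₀), ⟨w - w₀, ?_, rfl⟩, ?_⟩
      · refine LinearMap.mem_ker.mpr ?_
        rw [Matrix.mulVecLin_apply, Matrix.mulVec_sub, hFw, hw₀, sub_self]
      · rw [Matrix.mulVec_sub]; ring_nf
    · rintro ⟨x, ⟨z, hz, rfl⟩, rfl⟩
      refine ⟨w₀ + z, ?_, ?_⟩
      · rw [Matrix.mulVec_add, hw₀]
        have : Fᵀ.mulVec z = 0 := LinearMap.mem_ker.mp hz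
        rw [this, add_zero]
      · rw [Matrix.mulVec_add, Matrix.mulVecLin_apply]
  · have hK : Submodule ℝ (Quad N J → ℝ) := LinearMap.ker (Matrix.mulVecLin Fᵀ)
    let g := (Matrix.mulVecLin (Amat N J)ᵀ).comp (LinearMap.ker (Matrix.mulVecLin Fᵀ)).subtype
    have hrange : LinearMap.range g
        = Submodule.map (Matrix.mulVecLin (Amat N J)ᵀ) (LinearMap.ker (Matrix.mulVecLin Fᵀ)) := by
      rw [LinearMap.range_comp, Submodule.range_subtype]
    have hkerg : LinearMap.ker g
        = Submodule.comap (LinearMap.ker (Matrix.mulVecLin Fᵀ)).subtype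
            (LinearMap.ker (Matrix.mulVecLin (Amat N J)ᵀ)) := by
      rw [LinearMap.ker_comp]
    have hkerg_rank : Module.finrank ℝ (LinearMap.ker g)
        = Module.finrank ℝ (LinearMap.ker (Matrix.mulVecLin (Amat N J)ᵀ)) := by
      rw [hkerg]
      exact LinearEquiv.finrank_eq (Submodule.comapSubtypeEquivOfLe hker)
    have hrn := LinearMap.finrank_range_add_finrank_ker g
    rw [hrange, hkerg_rank] at hrn
    -- rank-nullity for Fᵀ and Aᵀ
    have hF := LinearMap.finrank_range_add_finrank_ker (Matrix.mulVecLin Fᵀ)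
    have hA := LinearMap.finrank_range_add_finrank_ker (Matrix.mulVecLin (Amat N J)ᵀ)
    have hFrank : Module.finrank ℝ (LinearMap.range (Matrix.mulVecLin Fᵀ)) = F.rank := by
      rw [← Matrix.rank_transpose F, Matrix.rank]
    have hArank : Module.finrank ℝ (LinearMap.range (Matrix.mulVecLin (Amat N J)ᵀ))
        = (N - 1) * (J - 1) := by
      rw [← rank_Amat N J (by omega) (by omega), ← Matrix.rank_transpose, Matrix.rank]
    rw [hFrank] at hF
    rw [hArank] at hA
    generalize hR : (N - 1) * (J - 1) = R at hA ⊢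
    omega
end

section
/- A vector u ∈ ℝ^(N×J) can be realized as the observation-weight vector of some weighted combination of two-by-two DID estimators, i.e., u = Aᵀ w for some weight vector w on the quadruples, if and only if all of its unit-wise and period-wise sums vanish: Σ_{j=1}^{J} u(i,j) = 0 for every unit i and Σ_{i=1}^{N} u(i,j) = 0 for every period j. In particular, purely vertical comparisons (whose unit-wise sums are nonzero) cannot be constructed as weighted averages of two-by-two DID estimators. -/
open Matrix

lemma sum_ind_right {N J : ℕ} (i : Fin N) (x : Fin N) (y : Fin J) :
    (∑ j : Fin J, if (i, j) = (x, y) then (1:ℝ) else 0) = if i = x then 1 else 0 := by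
  rw [Finset.sum_eq_single y]
  · simp [Prod.ext_iff]
  · intro b _ hb; simp [Prod.ext_iff, hb]
  · simp
lemma sum_ind_left {N J : ℕ} (j : Fin J) (x : Fin N) (y : Fin J) :
    (∑ i : Fin N, if (i, j) = (x, y) then (1:ℝ) else 0) = if j = y then 1 else 0 := by
  rw [Finset.sum_eq_single x]
  · simp [Prod.ext_iff]
  · intro b _ hb; simp [Prod.ext_iff, hb]
  · simp

/-- A vector u ∈ ℝ^(N×J) equals Aᵀ w for some weight vector w on the
quadruples if and only if all of its unit-wise and period-wise sums vanish. -/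
theorem obs_weights_characterization
    (N J : ℕ) (hN : 2 ≤ N) (hJ : 2 ≤ J) (u : Fin N × Fin J → ℝ) :
    (∃ w : Quad N J → ℝ, u = (Amat N J)ᵀ.mulVec w)
      ↔ ((∀ i : Fin N, ∑ j : Fin J, u (i, j) = 0)
          ∧ (∀ j : Fin J, ∑ i : Fin N, u (i, j) = 0)) := by
  constructor
  · rintro ⟨w, rfl⟩
    constructor
    · intro i
      simp only [Matrix.mulVec, dotProduct, Matrix.transpose_apply]
      rw [Finset.sum_comm]
      refine Finset.sum_eq_zero fun q _ => ?_
      rw [← Finset.sum_mul]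
      have : (∑ j : Fin J, Amat N J q (i, j)) = 0 := by
        simp only [Amat, Matrix.of_apply]
        rw [Finset.sum_sub_distrib, Finset.sum_sub_distrib, Finset.sum_add_distrib,
          sum_ind_right, sum_ind_right, sum_ind_right, sum_ind_right]
        ring
      rw [this, zero_mul]
    · intro j
      simp only [Matrix.mulVec, dotProduct, Matrix.transpose_apply]
      rw [Finset.sum_comm]
      refine Finset.sum_eq_zero fun q _ => ?_
      rw [← Finset.sum_mul]
      have : (∑ i : Fin N, Amat N J q (i, j)) = 0 := by
        simp only [Amat, Matrix.of_apply]
        rw [Finset.sum_sub_distrib, Finset.sum_sub_distrib, Finset.sum_add_distrib,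
          sum_ind_left, sum_ind_left, sum_ind_left, sum_ind_left]
        ring
      rw [this, zero_mul]
  · rintro ⟨h1, h2⟩
    obtain ⟨n, rfl⟩ : ∃ n, N = n + 1 := ⟨N - 1, by omega⟩
    obtain ⟨m, rfl⟩ : ∃ m, J = m + 1 := ⟨J - 1, by omega⟩
    set w : Quad (n+1) (m+1) → ℝ := fun q =>
      if q.val.1.2 = Fin.last n ∧ q.val.2.2 = Fin.last m then
        -u (q.val.1.1, q.val.2.1) else 0 with hw
    refine ⟨w, ?_⟩
    funext p
    obtain ⟨a, b⟩ := p
    have hrow : ∀ i : Fin (n+1), ∑ j : Fin m, u (i, j.castSucc) = -u (i, Fin.last m) := by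
      intro i
      have := h1 i
      rw [Fin.sum_univ_castSucc] at this
      linarith
    have hcol : ∀ j : Fin (m+1), ∑ i : Fin n, u (i.castSucc, j) = -u (Fin.last n, j) := by
      intro j
      have := h2 j
      rw [Fin.sum_univ_castSucc] at this
      linarith
    -- embedding of interior pairs into Quad
    set ι : Fin n × Fin m ↪ Quad (n+1) (m+1) :=
      ⟨fun x => ⟨((x.1.castSucc, Fin.last n), (x.2.castSucc, Fin.last m)),
        ⟨Fin.castSucc_lt_last x.1, Fin.castSucc_lt_last x.2⟩⟩,
       @id (Function.Injective _) <| by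
        rintro ⟨i, j⟩ ⟨i', j'⟩ h
        simp only [Subtype.mk.injEq, Prod.mk.injEq] at h
        obtain ⟨⟨hi, -⟩, hj, -⟩ := h
        simp_all [Fin.castSucc_inj]⟩ with hι
    have key : ((Amat (n+1) (m+1))ᵀ.mulVec w) (a, b)
        = ∑ x : Fin n × Fin m, Amat (n+1) (m+1) (ι x) (a, b) * (-u (x.1.castSucc, x.2.castSucc)) := by
      have h0 : ∀ q ∈ (Finset.univ : Finset (Quad (n+1) (m+1))),
          q ∉ Finset.map ι Finset.univ → Amat (n+1) (m+1) q (a, b) * w q = 0 := by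
        intro q _ hq
        have : ¬(q.val.1.2 = Fin.last n ∧ q.val.2.2 = Fin.last m) := by
          intro hc
          apply hq
          simp only [Finset.mem_map, Finset.mem_univ, true_and]
          refine ⟨(q.val.1.1.castPred ?_, q.val.2.1.castPred ?_), ?_⟩
          · exact Fin.ne_last_of_lt (hc.1 ▸ q.prop.1)
          · exact Fin.ne_last_of_lt (hc.2 ▸ q.prop.2)
          · apply Subtype.ext
            simp [hι, Fin.castSucc_castPred, ← hc.1, ← hc.2]
        simp [hw, this]
      simp only [Matrix.mulVec, dotProduct, Matrix.transpose_apply]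
      rw [← Finset.sum_subset (Finset.subset_univ _) h0, Finset.sum_map]
      refine Finset.sum_congr rfl fun x _ => ?_
      have : w (ι x) = -u (x.1.castSucc, x.2.castSucc) := by simp [hw, hι]
      rw [this]
    rw [key]
    have hcsn : ∀ x : Fin n, Fin.last n ≠ Fin.castSucc x := fun x => (Fin.castSucc_lt_last x).ne'
    have hcsm : ∀ y : Fin m, Fin.last m ≠ Fin.castSucc y := fun y => (Fin.castSucc_lt_last y).ne'
    have hcsn' : ∀ x : Fin n, Fin.castSucc x ≠ Fin.last n := fun x => (Fin.castSucc_lt_last x).ne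
    have hcsm' : ∀ y : Fin m, Fin.castSucc y ≠ Fin.last m := fun y => (Fin.castSucc_lt_last y).ne
    by_cases ha : a = Fin.last n <;> by_cases hb : b = Fin.last m
    · subst ha; subst hb
      simp only [Amat, Matrix.of_apply, hι, Function.Embedding.coeFn_mk, Prod.mk.injEq,
        hcsn, hcsm, false_and, and_false, if_false, if_true, and_true, and_self]
      rw [Fintype.sum_prod_type]
      simp only [zero_add, zero_sub, neg_mul, one_mul, neg_neg, sub_zero]
      simp only [hrow]
      rw [Finset.sum_neg_distrib, hcol, neg_neg]
    · have hbb : Fin.castSucc (b.castPred hb) = b := Fin.castSucc_castPred b hb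
      subst ha; rw [← hbb]
      simp only [Amat, Matrix.of_apply, hι, Function.Embedding.coeFn_mk, Prod.mk.injEq,
        hcsn, hcsm, hcsn', hcsm', false_and, and_false, if_false, true_and,
        Fin.castSucc_inj]
      rw [Fintype.sum_prod_type]
      simp only [zero_add, sub_zero, ite_mul, one_mul, zero_mul, Finset.sum_ite_eq,
        Finset.mem_univ, if_true]
      rw [Finset.sum_neg_distrib, hcol, neg_neg]
    · have haa : Fin.castSucc (a.castPred ha) = a := Fin.castSucc_castPred a ha
      subst hb; rw [← haa]
      simp only [Amat, Matrix.of_apply, hι, Function.Embedding.coeFn_mk, Prod.mk.injEq,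
        hcsn, hcsm, hcsn', hcsm', false_and, and_false, if_false, and_true, true_and,
        Fin.castSucc_inj]
      rw [Fintype.sum_prod_type]
      simp only [ite_mul, one_mul, zero_mul, add_zero, zero_add, sub_zero, zero_sub]
      rw [Finset.sum_comm]
      simp only [Finset.sum_ite_eq, Finset.mem_univ, if_true]
      rw [Finset.sum_neg_distrib, hrow, neg_neg]
    · have haa : Fin.castSucc (a.castPred ha) = a := Fin.castSucc_castPred a ha
      have hbb : Fin.castSucc (b.castPred hb) = b := Fin.castSucc_castPred b hb
      rw [← haa, ← hbb]
      simp only [Amat, Matrix.of_apply, hι, Function.Embedding.coeFn_mk, Prod.mk.injEq,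
        hcsn, hcsm, hcsn', hcsm', false_and, and_false, if_false, Fin.castSucc_inj]
      rw [Fintype.sum_prod_type]
      simp only [zero_add, zero_sub, ite_and, ite_mul, one_mul, zero_mul, neg_mul,
        neg_neg, neg_zero, sub_zero, Finset.sum_ite_eq, Finset.mem_univ, if_true]
      simp only [apply_ite (fun r : ℝ => -r), neg_zero, neg_neg]
      rw [Finset.sum_comm]
      simp only [Finset.sum_ite_eq, Finset.mem_univ, if_true]
end

section
/- (Type 2: switch vs. always-untreated.) Under consistency, no anticipation, no spillover at the level of means, staggered adoption, and parallel trends, if units i, i' and periods j, j' satisfy j < T(i) ≤ j' < T(i'), then the expected two-by-two DID equals the treatment effect of unit i in period j': E[D_{i,i',j,j'}] = θ(i,j'). -/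
/-- Type 2: switch vs. always-untreated: under consistency, no anticipation, no spillover at the level of means, staggered adoption, and parallel trends, if j < T(i) ≤ j' < T(i'), then E[D_{i,i',j,j'}] = θ(i,j'). -/
theorem expn_did_type2
    (N J : ℕ) (hN : 1 ≤ N) (hJ : 1 ≤ J)
    (m0 m1 θ X μ : ℕ → ℕ → ℝ) (T : ℕ → ℕ) (ED : ℕ → ℕ → ℕ → ℕ → ℝ)
    (hθ : ∀ i j, θ i j = m1 i j - m0 i j)
    (hT : ∀ i, 1 ≤ i → i ≤ N → 1 ≤ T i ∧ T i ≤ J + 1)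
    (hX : ∀ i j, X i j = if T i ≤ j then 1 else 0)
    (hμ : ∀ i j, μ i j = m0 i j + θ i j * X i j)
    (hED : ∀ i i' j j', ED i i' j j' = (μ i j' - μ i j) - (μ i' j' - μ i' j))
    (hPT : ∀ i i' j j', m0 i j' - m0 i j = m0 i' j' - m0 i' j)
    (i i' j j' : ℕ)
    (hi : 1 ≤ i) (hiN : i ≤ N) (hi' : 1 ≤ i') (hi'N : i' ≤ N)
    (hj : 1 ≤ j) (hjJ : j ≤ J) (hj' : 1 ≤ j') (hj'J : j' ≤ J)
    (h1 : j < T i) (h2 : T i ≤ j') (h3 : j' < T i') :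
    ED i i' j j' = θ i j' := by
  have hXij : X i j = 0 := by rw [hX]; simp [not_le.mpr h1]
  have hXij' : X i j' = 1 := by rw [hX]; simp [h2]
  have hXi'j' : X i' j' = 0 := by rw [hX]; simp [not_le.mpr h3]
  have hXi'j : X i' j = 0 := by
    rw [hX]; simp [not_le.mpr (lt_of_lt_of_le h1 (le_trans h2 (le_of_lt h3)))]
  have := hPT i i' j j'
  rw [hED, hμ, hμ, hμ, hμ, hXij, hXij', hXi'j', hXi'j]
  ring_nf
  linarith
end

section
/- (Type 3: always-treated vs. always-untreated.) Under consistency, no anticipation, no spillover at the level of means, staggered adoption, and parallel trends, if units i, i' and periods j, j' satisfy T(i) ≤ j < j' < T(i'), then the expected two-by-two DID equals the difference of unit i's treatment effects across the two periods: E[D_{i,i',j,j'}] = θ(i,j') − θ(i,j). -/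
/-- Type 3: always-treated vs. always-untreated: under consistency, no anticipation, no spillover at the level of means, staggered adoption, and parallel trends, if T(i) ≤ j < j' < T(i'), then E[D_{i,i',j,j'}] = θ(i,j') − θ(i,j). -/
theorem expn_did_type3
    (N J : ℕ) (hN : 1 ≤ N) (hJ : 1 ≤ J)
    (m0 m1 θ X μ : ℕ → ℕ → ℝ) (T : ℕ → ℕ) (ED : ℕ → ℕ → ℕ → ℕ → ℝ)
    (hθ : ∀ i j, θ i j = m1 i j - m0 i j)
    (hT : ∀ i, 1 ≤ i → i ≤ N → 1 ≤ T i ∧ T i ≤ J + 1)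
    (hX : ∀ i j, X i j = if T i ≤ j then 1 else 0)
    (hμ : ∀ i j, μ i j = m0 i j + θ i j * X i j)
    (hED : ∀ i i' j j', ED i i' j j' = (μ i j' - μ i j) - (μ i' j' - μ i' j))
    (hPT : ∀ i i' j j', m0 i j' - m0 i j = m0 i' j' - m0 i' j)
    (i i' j j' : ℕ)
    (hi : 1 ≤ i) (hiN : i ≤ N) (hi' : 1 ≤ i') (hi'N : i' ≤ N)
    (hj : 1 ≤ j) (hjJ : j ≤ J) (hj' : 1 ≤ j') (hj'J : j' ≤ J)
    (h1 : T i ≤ j) (h2 : j < j') (h3 : j' < T i') :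
    ED i i' j j' = θ i j' - θ i j := by
  have hij : T i ≤ j := h1
  have hij' : T i ≤ j' := le_of_lt (lt_of_le_of_lt h1 h2)
  have hi'j : ¬ T i' ≤ j := by omega
  have hi'j' : ¬ T i' ≤ j' := by omega
  have e1 : X i j = 1 := by rw [hX]; simp [hij]
  have e2 : X i j' = 1 := by rw [hX]; simp [hij']
  have e3 : X i' j = 0 := by rw [hX]; simp [hi'j]
  have e4 : X i' j' = 0 := by rw [hX]; simp [hi'j']
  have pt := hPT i i' j j'
  rw [hED, hμ, hμ, hμ, hμ, e1, e2, e3, e4]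
  ring_nf
  linarith [pt]
end

section
/- (Type 4: both switch.) Under consistency, no anticipation, no spillover at the level of means, staggered adoption, and parallel trends, if units i, i' and periods j, j' satisfy j < T(i), T(i) ≤ T(i'), and T(i') ≤ j', then the expected two-by-two DID equals the difference of the two units' treatment effects in period j': E[D_{i,i',j,j'}] = θ(i,j') − θ(i',j'). -/
/-- Type 4: both switch: under consistency, no anticipation, no spillover at the level of means, staggered adoption, and parallel trends, if j < T(i), T(i) ≤ T(i'), and T(i') ≤ j', then E[D_{i,i',j,j'}] = θ(i,j') − θ(i',j'). -/
theorem expn_did_type4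
    (N J : ℕ) (hN : 1 ≤ N) (hJ : 1 ≤ J)
    (m0 m1 θ X μ : ℕ → ℕ → ℝ) (T : ℕ → ℕ) (ED : ℕ → ℕ → ℕ → ℕ → ℝ)
    (hθ : ∀ i j, θ i j = m1 i j - m0 i j)
    (hT : ∀ i, 1 ≤ i → i ≤ N → 1 ≤ T i ∧ T i ≤ J + 1)
    (hX : ∀ i j, X i j = if T i ≤ j then 1 else 0)
    (hμ : ∀ i j, μ i j = m0 i j + θ i j * X i j)
    (hED : ∀ i i' j j', ED i i' j j' = (μ i j' - μ i j) - (μ i' j' - μ i' j))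
    (hPT : ∀ i i' j j', m0 i j' - m0 i j = m0 i' j' - m0 i' j)
    (i i' j j' : ℕ)
    (hi : 1 ≤ i) (hiN : i ≤ N) (hi' : 1 ≤ i') (hi'N : i' ≤ N)
    (hj : 1 ≤ j) (hjJ : j ≤ J) (hj' : 1 ≤ j') (hj'J : j' ≤ J)
    (h1 : j < T i) (h2 : T i ≤ T i') (h3 : T i' ≤ j') :
    ED i i' j j' = θ i j' - θ i' j' := by
  have xi : X i j = 0 := by rw [hX]; simp [not_le.mpr h1]
  have xi' : X i' j = 0 := by rw [hX]; simp [not_le.mpr (lt_of_lt_of_le h1 h2)]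
  have yi : X i j' = 1 := by rw [hX]; simp [le_trans h2 h3]
  have yi' : X i' j' = 1 := by rw [hX]; simp [h3]
  have pt := hPT i i' j j'
  rw [hED, hμ, hμ, hμ, hμ, xi, xi', yi, yi', hθ, hθ]
  ring_nf
  ring_nf at pt
  linarith
end

section
/- (Type 5: always-treated vs. switch.) Under consistency, no anticipation, no spillover at the level of means, staggered adoption, and parallel trends, if units i, i' and periods j, j' satisfy T(i) ≤ j < T(i') ≤ j', then the expected two-by-two DID satisfies E[D_{i,i',j,j'}] = θ(i,j') − θ(i,j) − θ(i',j'). -/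
/-- Type 5: always-treated vs. switch: under consistency, no anticipation, no spillover at the level of means, staggered adoption, and parallel trends, if T(i) ≤ j < T(i') ≤ j', then E[D_{i,i',j,j'}] = θ(i,j') − θ(i,j) − θ(i',j'). -/
theorem expn_did_type5
    (N J : ℕ) (hN : 1 ≤ N) (hJ : 1 ≤ J)
    (m0 m1 θ X μ : ℕ → ℕ → ℝ) (T : ℕ → ℕ) (ED : ℕ → ℕ → ℕ → ℕ → ℝ)
    (hθ : ∀ i j, θ i j = m1 i j - m0 i j)
    (hT : ∀ i, 1 ≤ i → i ≤ N → 1 ≤ T i ∧ T i ≤ J + 1)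
    (hX : ∀ i j, X i j = if T i ≤ j then 1 else 0)
    (hμ : ∀ i j, μ i j = m0 i j + θ i j * X i j)
    (hED : ∀ i i' j j', ED i i' j j' = (μ i j' - μ i j) - (μ i' j' - μ i' j))
    (hPT : ∀ i i' j j', m0 i j' - m0 i j = m0 i' j' - m0 i' j)
    (i i' j j' : ℕ)
    (hi : 1 ≤ i) (hiN : i ≤ N) (hi' : 1 ≤ i') (hi'N : i' ≤ N)
    (hj : 1 ≤ j) (hjJ : j ≤ J) (hj' : 1 ≤ j') (hj'J : j' ≤ J)
    (h1 : T i ≤ j) (h2 : j < T i') (h3 : T i' ≤ j') :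
    ED i i' j j' = θ i j' - θ i j - θ i' j' := by
  have hij' : T i ≤ j' := h1.trans (le_of_lt (lt_of_lt_of_le h2 h3))
  have hnot : ¬ T i' ≤ j := not_le.mpr h2
  rw [hED, hμ, hμ, hμ, hμ, hX, hX, hX, hX, if_pos h1, if_pos hij', if_pos h3, if_neg hnot]
  have := hPT i i' j j'
  ring_nf
  ring_nf at this
  linarith
end

section
/- (Type 6: both always-treated.) Under consistency, no anticipation, no spillover at the level of means, staggered adoption, and parallel trends, if units i, i' and periods j, j' satisfy T(i) ≤ T(i') ≤ j < j', then the expected two-by-two DID satisfies E[D_{i,i',j,j'}] = (θ(i,j') − θ(i,j)) − (θ(i',j') − θ(i',j)). In particular, if the treatment effect is the same for all units and periods, this expectation is zero. -/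
/-- Type 6: both always-treated: under consistency, no anticipation, no spillover at the level of means, staggered adoption, and parallel trends, if T(i) ≤ T(i') ≤ j < j', then E[D_{i,i',j,j'}] = (θ(i,j') − θ(i,j)) − (θ(i',j') − θ(i',j)); in particular, if the treatment effect is the same for all units and periods, this expectation is zero. -/
theorem expn_did_type6
    (N J : ℕ) (hN : 1 ≤ N) (hJ : 1 ≤ J)
    (m0 m1 θ X μ : ℕ → ℕ → ℝ) (T : ℕ → ℕ) (ED : ℕ → ℕ → ℕ → ℕ → ℝ)
    (hθ : ∀ i j, θ i j = m1 i j - m0 i j)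
    (hT : ∀ i, 1 ≤ i → i ≤ N → 1 ≤ T i ∧ T i ≤ J + 1)
    (hX : ∀ i j, X i j = if T i ≤ j then 1 else 0)
    (hμ : ∀ i j, μ i j = m0 i j + θ i j * X i j)
    (hED : ∀ i i' j j', ED i i' j j' = (μ i j' - μ i j) - (μ i' j' - μ i' j))
    (hPT : ∀ i i' j j', m0 i j' - m0 i j = m0 i' j' - m0 i' j)
    (i i' j j' : ℕ)
    (hi : 1 ≤ i) (hiN : i ≤ N) (hi' : 1 ≤ i') (hi'N : i' ≤ N)
    (hj : 1 ≤ j) (hjJ : j ≤ J) (hj' : 1 ≤ j') (hj'J : j' ≤ J)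
    (h1 : T i ≤ T i') (h2 : T i' ≤ j) (h3 : j < j') :
    ED i i' j j' = (θ i j' - θ i j) - (θ i' j' - θ i' j) ∧ (∀ c : ℝ, (∀ a b, θ a b = c) → ED i i' j j' = 0) := by
  have hij : T i ≤ j := le_trans h1 h2
  have hij' : T i ≤ j' := le_trans hij (le_of_lt h3)
  have hi'j' : T i' ≤ j' := le_trans h2 (le_of_lt h3)
  have key : ED i i' j j' = (θ i j' - θ i j) - (θ i' j' - θ i' j) := by
    rw [hED, hμ, hμ, hμ, hμ, hX, hX, hX, hX,
      if_pos hij, if_pos hij', if_pos h2, if_pos hi'j']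
    have := hPT i i' j j'
    ring_nf
    linarith [hPT i i' j j']
  refine ⟨key, fun c hc => ?_⟩
  rw [key, hc, hc, hc, hc]; ring
end
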